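/- Let α = 5 and let G be the graph obtained from the complete graph K_5 by subdividing once every edge of a fixed Hamilton cycle, with all edges of weight 1, and let C be the resulting cycle of length 10. Then for every pair of distinct nodes u ≠ v of G and every edge e ∈ C, there exists a u-v path of weight at most 5·d_G(u,v) that contains e. -/

import Mathlib

/-- The original (degree-4) vertices of the subdivided `K₅`. -/
def origV : Set (ZMod 10) := {0, 2, 4, 6, 8}

/-- `K₅` with every edge of a fixed Hamilton cycle subdivided once: the original vertices are
the even elements of `ZMod 10`, the cycle is `i — i+1`, and the chords join original vertices
that are not consecutive on the Hamilton cycle. -/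
def subK5 : SimpleGraph (ZMod 10) :=
  SimpleGraph.fromRel (fun i j =>
    j = i + 1 ∨ (i ∈ origV ∧ j ∈ origV ∧ j ≠ i + 2 ∧ i ≠ j + 2))

/-- The edges of the 10-cycle `C`. -/
def Cedges : Set (Sym2 (ZMod 10)) := {e | ∃ i : ZMod 10, e = s(i, i + 1)}

instance : DecidablePred (· ∈ origV) := fun i =>
  decidable_of_iff (i = 0 ∨ i = 2 ∨ i = 4 ∨ i = 6 ∨ i = 8) (by simp [origV])

instance : DecidableRel subK5.Adj := fun a b =>
  decidable_of_iff _ (SimpleGraph.fromRel_adj _ a b).symm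

def tbl : List (List (List (List (ZMod 10)))) := [
 [
  [[],[],[],[],[],[],[],[],[],[]],
  [[1],[6,2,1],[4,3,2,1],[4,3,2,1],[4,5,6,2,1],[4,5,6,2,1],[6,7,8,2,1],[6,7,8,2,1],[9,8,2,1],[9,8,2,1]],
  [[1,2],[1,2],[4,3,2],[4,3,2],[4,5,6,2],[4,5,6,2],[6,7,8,2],[6,7,8,2],[9,8,2],[9,8,2]],
  [[1,2,3],[1,2,3],[1,2,3],[4,3],[6,5,4,3],[6,5,4,3],[6,7,8,2,3],[6,7,8,2,3],[9,8,2,3],[9,8,2,3]],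
  [[1,2,3,4],[1,2,3,4],[1,2,3,4],[1,2,3,4],[6,5,4],[6,5,4],[6,7,8,4],[6,7,8,4],[9,8,4],[9,8,4]],
  [[1,2,6,5],[1,2,6,5],[1,2,3,4,5],[1,2,3,4,5],[4,5],[6,5],[4,8,7,6,5],[4,8,7,6,5],[9,8,4,5],[9,8,4,5]],
  [[1,2,6],[1,2,6],[4,3,2,6],[4,3,2,6],[4,5,6],[4,5,6],[4,8,7,6],[4,8,7,6],[9,8,2,6],[9,8,2,6]],
  [[1,2,6,7],[1,2,6,7],[4,3,2,6,7],[4,3,2,6,7],[4,5,6,7],[4,5,6,7],[6,7],[4,8,7],[9,8,7],[9,8,7]],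
  [[1,2,8],[1,2,8],[4,3,2,8],[4,3,2,8],[6,5,4,8],[6,5,4,8],[6,7,8],[6,7,8],[9,8],[9,8]],
  [[1,2,8,9],[1,2,8,9],[4,3,2,8,9],[4,3,2,8,9],[6,5,4,8,9],[6,5,4,8,9],[6,7,8,9],[6,7,8,9],[4,8,9],[9]]],
 [
  [[0],[2,6,0],[2,3,4,0],[2,3,4,0],[2,6,5,4,0],[2,6,5,4,0],[2,8,7,6,0],[2,8,7,6,0],[2,8,9,0],[2,8,9,0]],
  [[],[],[],[],[],[],[],[],[],[]],
  [[0,6,2],[2],[0,4,3,2],[0,4,3,2],[0,4,5,6,2],[0,4,5,6,2],[0,6,7,8,2],[0,6,7,8,2],[0,9,8,2],[0,9,8,2]],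
  [[0,4,3],[2,3],[2,3],[0,4,3],[0,6,5,4,3],[0,6,5,4,3],[0,6,7,8,2,3],[0,6,7,8,2,3],[0,9,8,2,3],[0,9,8,2,3]],
  [[0,4],[2,3,4],[2,3,4],[2,3,4],[0,6,5,4],[0,6,5,4],[0,6,7,8,4],[0,6,7,8,4],[0,9,8,4],[0,9,8,4]],
  [[0,4,5],[2,6,5],[2,3,4,5],[2,3,4,5],[0,4,5],[0,6,5],[2,8,7,6,5],[2,8,7,6,5],[0,9,8,4,5],[0,9,8,4,5]],
  [[0,6],[2,6],[0,4,3,2,6],[0,4,3,2,6],[0,4,5,6],[0,4,5,6],[2,8,7,6],[2,8,7,6],[0,9,8,2,6],[0,9,8,2,6]],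
  [[0,6,7],[2,6,7],[2,3,4,8,7],[2,3,4,8,7],[0,4,5,6,7],[0,4,5,6,7],[0,6,7],[2,8,7],[0,9,8,7],[0,9,8,7]],
  [[0,4,8],[2,8],[2,3,4,8],[2,3,4,8],[0,6,5,4,8],[0,6,5,4,8],[0,6,7,8],[0,6,7,8],[0,9,8],[0,9,8]],
  [[0,9],[2,8,9],[2,3,4,0,9],[2,3,4,0,9],[0,6,5,4,8,9],[0,6,5,4,8,9],[0,6,7,8,9],[0,6,7,8,9],[2,8,9],[0,9]]],
 [
  [[1,0],[1,0],[3,4,0],[3,4,0],[6,5,4,0],[6,5,4,0],[8,7,6,0],[8,7,6,0],[8,9,0],[8,9,0]],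
  [[6,0,1],[1],[3,4,0,1],[3,4,0,1],[6,5,4,0,1],[6,5,4,0,1],[8,7,6,0,1],[8,7,6,0,1],[8,9,0,1],[8,9,0,1]],
  [[],[],[],[],[],[],[],[],[],[]],
  [[1,0,4,3],[1,0,4,3],[3],[8,4,3],[6,5,4,3],[6,5,4,3],[6,7,8,4,3],[6,7,8,4,3],[8,9,0,4,3],[8,9,0,4,3]],
  [[1,0,4],[1,0,4],[3,4],[3,4],[6,5,4],[6,5,4],[6,7,8,4],[6,7,8,4],[8,9,0,4],[8,9,0,4]],
  [[1,0,4,5],[1,0,4,5],[3,4,5],[3,4,5],[3,4,5],[6,5],[8,7,6,5],[8,7,6,5],[8,9,0,4,5],[8,9,0,4,5]],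
  [[1,0,6],[1,0,6],[3,4,0,6],[3,4,0,6],[3,4,5,6],[3,4,5,6],[8,7,6],[8,7,6],[8,9,0,6],[8,9,0,6]],
  [[1,0,6,7],[1,0,6,7],[3,4,8,7],[3,4,8,7],[3,4,5,6,7],[3,4,5,6,7],[6,7],[8,7],[1,0,9,8,7],[1,0,9,8,7]],
  [[1,0,4,8],[1,0,4,8],[3,4,8],[3,4,8],[6,5,4,8],[6,5,4,8],[6,7,8],[6,7,8],[1,0,9,8],[1,0,9,8]],
  [[1,0,9],[1,0,9],[3,4,0,9],[3,4,0,9],[6,5,4,0,9],[6,5,4,0,9],[6,7,8,9],[6,7,8,9],[8,9],[1,0,9]]],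
 [
  [[2,1,0],[2,1,0],[2,1,0],[4,0],[4,5,6,0],[4,5,6,0],[2,8,7,6,0],[2,8,7,6,0],[2,8,9,0],[2,8,9,0]],
  [[4,0,1],[2,1],[2,1],[4,0,1],[4,5,6,0,1],[4,5,6,0,1],[2,8,7,6,0,1],[2,8,7,6,0,1],[2,8,9,0,1],[2,8,9,0,1]],
  [[4,0,1,2],[4,0,1,2],[2],[4,8,2],[4,5,6,2],[4,5,6,2],[4,8,7,6,2],[4,8,7,6,2],[4,0,9,8,2],[4,0,9,8,2]],
  [[],[],[],[],[],[],[],[],[],[]],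
  [[2,1,0,4],[2,1,0,4],[2,8,4],[4],[2,6,5,4],[2,6,5,4],[2,6,7,8,4],[2,6,7,8,4],[2,8,9,0,4],[2,8,9,0,4]],
  [[2,1,0,4,5],[2,1,0,4,5],[2,6,5],[4,5],[4,5],[2,6,5],[2,8,7,6,5],[2,8,7,6,5],[2,8,9,0,4,5],[2,8,9,0,4,5]],
  [[2,1,0,6],[2,1,0,6],[2,6],[4,0,6],[4,5,6],[4,5,6],[2,8,7,6],[2,8,7,6],[2,8,9,0,6],[2,8,9,0,6]],
  [[2,1,0,6,7],[2,1,0,6,7],[2,6,7],[4,8,7],[4,5,6,7],[4,5,6,7],[2,6,7],[2,8,7],[4,0,9,8,7],[4,0,9,8,7]],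
  [[2,1,0,4,8],[2,1,0,4,8],[2,8],[4,8],[2,6,5,4,8],[2,6,5,4,8],[2,6,7,8],[2,6,7,8],[4,0,9,8],[4,0,9,8]],
  [[2,1,0,9],[2,1,0,9],[2,8,9],[4,0,9],[4,5,6,0,9],[4,5,6,0,9],[2,6,7,8,9],[2,6,7,8,9],[2,8,9],[4,0,9]]],
 [
  [[3,2,1,0],[3,2,1,0],[3,2,1,0],[3,2,1,0],[5,6,0],[5,6,0],[8,7,6,0],[8,7,6,0],[8,9,0],[8,9,0]],
  [[0,1],[3,2,1],[3,2,1],[3,2,1],[5,6,0,1],[5,6,0,1],[8,7,6,0,1],[8,7,6,0,1],[8,9,0,1],[8,9,0,1]],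
  [[0,1,2],[0,1,2],[3,2],[3,2],[5,6,2],[5,6,2],[8,7,6,2],[8,7,6,2],[0,9,8,2],[0,9,8,2]],
  [[0,1,2,3],[0,1,2,3],[8,2,3],[3],[5,6,2,3],[5,6,2,3],[8,7,6,2,3],[8,7,6,2,3],[0,9,8,2,3],[0,9,8,2,3]],
  [[],[],[],[],[],[],[],[],[],[]],
  [[0,1,2,6,5],[0,1,2,6,5],[3,2,6,5],[3,2,6,5],[5],[0,6,5],[8,7,6,5],[8,7,6,5],[8,9,0,6,5],[8,9,0,6,5]],
  [[0,1,2,6],[0,1,2,6],[3,2,6],[3,2,6],[5,6],[5,6],[8,7,6],[8,7,6],[8,9,0,6],[8,9,0,6]],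
  [[0,1,2,6,7],[0,1,2,6,7],[3,2,6,7],[3,2,6,7],[5,6,7],[5,6,7],[0,6,7],[8,7],[0,9,8,7],[0,9,8,7]],
  [[0,1,2,8],[0,1,2,8],[3,2,8],[3,2,8],[5,6,2,8],[5,6,2,8],[0,6,7,8],[0,6,7,8],[0,9,8],[0,9,8]],
  [[0,1,2,8,9],[0,1,2,8,9],[3,2,8,9],[3,2,8,9],[5,6,0,9],[5,6,0,9],[0,6,7,8,9],[0,6,7,8,9],[8,9],[0,9]]],
 [
  [[6,2,1,0],[6,2,1,0],[4,3,2,1,0],[4,3,2,1,0],[4,0],[6,0],[4,8,7,6,0],[4,8,7,6,0],[4,8,9,0],[4,8,9,0]],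
  [[4,0,1],[6,2,1],[4,3,2,1],[4,3,2,1],[4,0,1],[6,0,1],[6,7,8,2,1],[6,7,8,2,1],[4,8,9,0,1],[4,8,9,0,1]],
  [[4,0,1,2],[4,0,1,2],[4,3,2],[4,3,2],[4,3,2],[6,2],[6,7,8,2],[6,7,8,2],[4,0,9,8,2],[4,0,9,8,2]],
  [[4,0,1,2,3],[4,0,1,2,3],[6,2,3],[4,3],[4,3],[6,2,3],[6,7,8,2,3],[6,7,8,2,3],[4,0,9,8,2,3],[4,0,9,8,2,3]],
  [[6,2,1,0,4],[6,2,1,0,4],[6,2,3,4],[6,2,3,4],[4],[6,0,4],[6,7,8,4],[6,7,8,4],[6,0,9,8,4],[6,0,9,8,4]],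
  [[],[],[],[],[],[],[],[],[],[]],
  [[4,0,1,2,6],[4,0,1,2,6],[4,3,2,6],[4,3,2,6],[4,0,6],[6],[4,8,7,6],[4,8,7,6],[4,8,9,0,6],[4,8,9,0,6]],
  [[4,0,1,2,6,7],[4,0,1,2,6,7],[4,3,2,6,7],[4,3,2,6,7],[4,8,7],[6,7],[6,7],[4,8,7],[4,0,9,8,7],[4,0,9,8,7]],
  [[4,0,1,2,8],[4,0,1,2,8],[4,3,2,8],[4,3,2,8],[4,8],[6,2,8],[6,7,8],[6,7,8],[4,0,9,8],[4,0,9,8]],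
  [[6,2,1,0,9],[6,2,1,0,9],[4,3,2,8,9],[4,3,2,8,9],[4,0,9],[6,0,9],[6,7,8,9],[6,7,8,9],[4,8,9],[4,0,9]]],
 [
  [[2,1,0],[2,1,0],[2,3,4,0],[2,3,4,0],[5,4,0],[5,4,0],[7,8,4,0],[7,8,4,0],[2,8,9,0],[2,8,9,0]],
  [[0,1],[2,1],[0,4,3,2,1],[0,4,3,2,1],[5,4,0,1],[5,4,0,1],[7,8,2,1],[7,8,2,1],[0,9,8,2,1],[0,9,8,2,1]],
  [[0,1,2],[0,1,2],[0,4,3,2],[0,4,3,2],[5,4,3,2],[5,4,3,2],[7,8,2],[7,8,2],[0,9,8,2],[0,9,8,2]],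
  [[0,1,2,3],[0,1,2,3],[2,3],[0,4,3],[5,4,3],[5,4,3],[7,8,2,3],[7,8,2,3],[0,9,8,2,3],[0,9,8,2,3]],
  [[2,1,0,4],[2,1,0,4],[2,3,4],[2,3,4],[5,4],[5,4],[7,8,4],[7,8,4],[0,9,8,4],[0,9,8,4]],
  [[2,1,0,4,5],[2,1,0,4,5],[2,3,4,5],[2,3,4,5],[0,4,5],[5],[7,8,4,5],[7,8,4,5],[0,9,8,4,5],[0,9,8,4,5]],
  [[],[],[],[],[],[],[],[],[],[]],
  [[0,1,2,8,7],[0,1,2,8,7],[2,3,4,8,7],[2,3,4,8,7],[5,4,8,7],[5,4,8,7],[7],[2,8,7],[0,9,8,7],[0,9,8,7]],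
  [[0,1,2,8],[0,1,2,8],[2,3,4,8],[2,3,4,8],[5,4,8],[5,4,8],[7,8],[7,8],[0,9,8],[0,9,8]],
  [[2,1,0,9],[2,1,0,9],[2,3,4,0,9],[2,3,4,0,9],[5,4,0,9],[5,4,0,9],[7,8,9],[7,8,9],[2,8,9],[0,9]]],
 [
  [[6,2,1,0],[6,2,1,0],[6,2,3,4,0],[6,2,3,4,0],[6,5,4,0],[6,5,4,0],[6,0],[8,4,0],[8,9,0],[8,9,0]],
  [[6,0,1],[6,2,1],[8,4,3,2,1],[8,4,3,2,1],[6,5,4,0,1],[6,5,4,0,1],[6,0,1],[8,2,1],[8,9,0,1],[8,9,0,1]],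
  [[6,0,1,2],[6,0,1,2],[8,4,3,2],[8,4,3,2],[6,5,4,3,2],[6,5,4,3,2],[6,2],[8,2],[6,0,9,8,2],[6,0,9,8,2]],
  [[6,0,1,2,3],[6,0,1,2,3],[6,2,3],[8,4,3],[6,5,4,3],[6,5,4,3],[6,2,3],[8,2,3],[8,9,0,4,3],[8,9,0,4,3]],
  [[6,2,1,0,4],[6,2,1,0,4],[6,2,3,4],[6,2,3,4],[6,5,4],[6,5,4],[6,0,4],[8,4],[8,9,0,4],[8,9,0,4]],
  [[6,2,1,0,4,5],[6,2,1,0,4,5],[6,2,3,4,5],[6,2,3,4,5],[8,4,5],[6,5],[6,5],[8,4,5],[8,9,0,4,5],[8,9,0,4,5]],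
  [[8,2,1,0,6],[8,2,1,0,6],[8,4,3,2,6],[8,4,3,2,6],[8,4,5,6],[8,4,5,6],[6],[8,2,6],[8,9,0,6],[8,9,0,6]],
  [[],[],[],[],[],[],[],[],[],[]],
  [[6,0,1,2,8],[6,0,1,2,8],[6,2,3,4,8],[6,2,3,4,8],[6,5,4,8],[6,5,4,8],[6,2,8],[8],[6,0,9,8],[6,0,9,8]],
  [[6,2,1,0,9],[6,2,1,0,9],[6,2,3,4,0,9],[6,2,3,4,0,9],[6,5,4,0,9],[6,5,4,0,9],[6,0,9],[8,9],[8,9],[6,0,9]]],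
 [
  [[2,1,0],[2,1,0],[2,3,4,0],[2,3,4,0],[4,5,6,0],[4,5,6,0],[7,6,0],[7,6,0],[9,0],[9,0]],
  [[4,0,1],[2,1],[4,3,2,1],[4,3,2,1],[4,5,6,0,1],[4,5,6,0,1],[7,6,0,1],[7,6,0,1],[9,0,1],[9,0,1]],
  [[4,0,1,2],[4,0,1,2],[4,3,2],[4,3,2],[4,5,6,2],[4,5,6,2],[7,6,2],[7,6,2],[9,0,1,2],[9,0,1,2]],
  [[2,1,0,4,3],[2,1,0,4,3],[2,3],[4,3],[2,6,5,4,3],[2,6,5,4,3],[7,6,2,3],[7,6,2,3],[9,0,4,3],[9,0,4,3]],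
  [[2,1,0,4],[2,1,0,4],[2,3,4],[2,3,4],[2,6,5,4],[2,6,5,4],[7,6,0,4],[7,6,0,4],[9,0,4],[9,0,4]],
  [[2,1,0,4,5],[2,1,0,4,5],[2,3,4,5],[2,3,4,5],[4,5],[2,6,5],[7,6,5],[7,6,5],[9,0,4,5],[9,0,4,5]],
  [[2,1,0,6],[2,1,0,6],[4,3,2,6],[4,3,2,6],[4,5,6],[4,5,6],[7,6],[7,6],[9,0,6],[9,0,6]],
  [[2,1,0,6,7],[2,1,0,6,7],[4,3,2,6,7],[4,3,2,6,7],[4,5,6,7],[4,5,6,7],[2,6,7],[7],[9,0,6,7],[9,0,6,7]],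
  [[],[],[],[],[],[],[],[],[],[]],
  [[2,1,0,9],[2,1,0,9],[2,3,4,0,9],[2,3,4,0,9],[4,5,6,0,9],[4,5,6,0,9],[7,6,0,9],[7,6,0,9],[9],[4,0,9]]],
 [
  [[8,2,1,0],[8,2,1,0],[8,2,3,4,0],[8,2,3,4,0],[8,4,5,6,0],[8,4,5,6,0],[8,7,6,0],[8,7,6,0],[8,4,0],[0]],
  [[0,1],[8,2,1],[0,4,3,2,1],[0,4,3,2,1],[0,4,5,6,2,1],[0,4,5,6,2,1],[8,7,6,0,1],[8,7,6,0,1],[8,2,1],[0,1]],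
  [[0,1,2],[0,1,2],[0,4,3,2],[0,4,3,2],[0,4,5,6,2],[0,4,5,6,2],[8,7,6,2],[8,7,6,2],[8,2],[0,1,2]],
  [[0,1,2,3],[0,1,2,3],[8,2,3],[0,4,3],[0,6,5,4,3],[0,6,5,4,3],[8,7,6,2,3],[8,7,6,2,3],[8,2,3],[0,4,3]],
  [[0,1,2,3,4],[0,1,2,3,4],[8,2,3,4],[8,2,3,4],[0,6,5,4],[0,6,5,4],[0,6,7,8,4],[0,6,7,8,4],[8,4],[0,4]],
  [[0,1,2,6,5],[0,1,2,6,5],[8,2,3,4,5],[8,2,3,4,5],[0,4,5],[0,6,5],[8,7,6,5],[8,7,6,5],[8,4,5],[0,4,5]],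
  [[0,1,2,6],[0,1,2,6],[0,4,3,2,6],[0,4,3,2,6],[0,4,5,6],[0,4,5,6],[8,7,6],[8,7,6],[8,2,6],[0,6]],
  [[0,1,2,6,7],[0,1,2,6,7],[0,4,3,2,6,7],[0,4,3,2,6,7],[0,4,5,6,7],[0,4,5,6,7],[0,6,7],[8,7],[8,7],[0,6,7]],
  [[0,1,2,8],[0,1,2,8],[0,4,3,2,8],[0,4,3,2,8],[0,6,5,4,8],[0,6,5,4,8],[0,6,7,8],[0,6,7,8],[8],[0,4,8]],
  [[],[],[],[],[],[],[],[],[],[]]]]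

def mkW : (u v : ZMod 10) → (l : List (ZMod 10)) → Option (subK5.Walk u v)
  | u, v, [] => if h : u = v then some (h ▸ SimpleGraph.Walk.nil) else none
  | u, v, (a :: l) =>
    if h : subK5.Adj u a then (mkW a v l).map (SimpleGraph.Walk.cons h) else none

def check (u v i : ZMod 10) : Bool :=
  match mkW u v ((((tbl.getD u.val []).getD v.val []).getD i.val [])) with
  | none => false
  | some p =>
    p.support.Nodup ∧ s(i, i + 1) ∈ p.edges ∧
      p.length ≤ (if subK5.Adj u v then 5 else 9)

theorem allcheck : ∀ u v i : ZMod 10, u ≠ v → check u v i = true := by decide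

/-- In the subdivided `K₅` with `α = 5`, for every pair of distinct nodes `u ≠ v` and every
edge `e` of the cycle `C`, some `u`-`v` path of (hop-)length at most `5·d_G(u,v)` contains `e`. -/
theorem subK5_every_cycle_edge_on_feasible_path :
    ∀ u v : ZMod 10, u ≠ v → ∀ e ∈ Cedges,
      ∃ p : subK5.Walk u v, p.IsPath ∧ e ∈ p.edges ∧ p.length ≤ 5 * subK5.dist u v := by
  intro u v huv e he
  obtain ⟨i, rfl⟩ := he
  have hc := allcheck u v i huv
  unfold check at hc
  cases hmk : mkW u v ((((tbl.getD u.val []).getD v.val []).getD i.val [])) with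
  | none => rw [hmk] at hc; simp at hc
  | some p =>
    rw [hmk] at hc
    simp only [decide_eq_true_eq, Bool.and_eq_true, decide_eq_true_iff] at hc
    obtain ⟨h1, h2, h3⟩ := hc
    refine ⟨p, SimpleGraph.Walk.IsPath.mk' h1, h2, ?_⟩
    have hreach : subK5.Reachable u v := ⟨p⟩
    have hpos : 0 < subK5.dist u v := hreach.pos_dist_of_ne huv
    by_cases hadj : subK5.Adj u v
    · rw [if_pos hadj] at h3
      omega
    · rw [if_neg hadj] at h3
      have hne1 : subK5.dist u v ≠ 1 := fun h =>
        hadj ((subK5.dist_eq_one_iff_adj).mp h)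
      omega
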